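/- Let a, b ∈ ℝ with a·p + b ≠ 0 for every p ∈ ℕ, and suppose the coefficients have the form A₁₁(x) = a x₁² + a₁₁ x₁ + b₁₁ x₂ + c₁₁, A₁₂(x) = a x₁x₂ + a₁₂ x₁ + b₁₂ x₂ + c₁₂, A₂₁(x) = a x₁x₂ + a₂₁ x₁ + b₂₁ x₂ + c₂₁, A₂₂(x) = a x₂² + a₂₂ x₁ + b₂₂ x₂ + c₂₂, B₁(x) = b x₁ + d₁, B₂(x) = b x₂ + d₂, where c₁₁ + c₁₂ + c₂₁ + c₂₂ = 0. Then for every n ∈ ℕ and every pair (r,s) ∈ ℕ × ℕ with r + s = n there exists a real polynomial P of total degree n whose homogeneous part of degree n equals x₁^r x₂^s, such that 𝒟P = λ_n P on ℤ × ℤ, where λ_n = n((n−1)a + b). -/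

import Mathlib

open MvPolynomial

noncomputable section

/-- Forward difference in the first variable. -/
def fd1 (u : ℤ × ℤ → ℝ) : ℤ × ℤ → ℝ := fun x => u (x.1 + 1, x.2) - u x

/-- Forward difference in the second variable. -/
def fd2 (u : ℤ × ℤ → ℝ) : ℤ × ℤ → ℝ := fun x => u (x.1, x.2 + 1) - u x

/-- Backward difference in the first variable. -/
def bd1 (u : ℤ × ℤ → ℝ) : ℤ × ℤ → ℝ := fun x => u x - u (x.1 - 1, x.2)

/-- Backward difference in the second variable. -/
def bd2 (u : ℤ × ℤ → ℝ) : ℤ × ℤ → ℝ := fun x => u x - u (x.1, x.2 - 1)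

/-- Evaluation of a two-variable real polynomial on the lattice `ℤ × ℤ`. -/
def pev (p : MvPolynomial (Fin 2) ℝ) : ℤ × ℤ → ℝ :=
  fun x => eval (fun i => if i = 0 then (x.1 : ℝ) else (x.2 : ℝ)) p

/-- The standard second order partial difference operator. -/
def Dop (A11 A12 A21 A22 B1 B2 : MvPolynomial (Fin 2) ℝ) (u : ℤ × ℤ → ℝ) : ℤ × ℤ → ℝ :=
  fun x => pev A11 x * fd1 (bd1 u) x + pev A12 x * fd1 (bd2 u) x
    + pev A21 x * fd2 (bd1 u) x + pev A22 x * fd2 (bd2 u) x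
    + pev B1 x * fd1 u x + pev B2 x * fd2 u x

abbrev P2 := MvPolynomial (Fin 2) ℝ

/-- shift substitution -/
def sh (c d : ℝ) : P2 →ₐ[ℝ] P2 := aeval ![X 0 + C c, X 1 + C d]

lemma eval_aeval' (f : Fin 2 → ℝ) (g : Fin 2 → P2) (p : P2) :
    eval f (aeval g p) = eval (fun i => eval f (g i)) p := by
  have : ((eval f : P2 →+* ℝ).comp ((aeval g : P2 →ₐ[ℝ] P2) : P2 →ₐ[ℝ] P2).toRingHom) =
      (eval (fun i => eval f (g i)) : P2 →+* ℝ) := by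
    apply MvPolynomial.ringHom_ext <;> simp
  exact RingHom.congr_fun this p

lemma pev_sh (c d : ℝ) (p : P2) (x : ℤ × ℤ) :
    pev (sh c d p) x =
      eval (fun i => if i = 0 then (x.1 : ℝ) + c else (x.2 : ℝ) + d) p := by
  unfold pev sh
  rw [eval_aeval']
  have h : (fun i : Fin 2 => eval (fun i : Fin 2 => if i = 0 then (x.1:ℝ) else (x.2:ℝ)) (![X 0 + C c, X 1 + C d] i))
      = (fun i : Fin 2 => if i = 0 then (x.1:ℝ) + c else (x.2:ℝ) + d) := by
    funext i; fin_cases i <;> simp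
  exact congrArg (fun v => eval v p) h

@[simp] lemma pev_add (p q : P2) (x) : pev (p + q) x = pev p x + pev q x := by simp [pev]
@[simp] lemma pev_sub (p q : P2) (x) : pev (p - q) x = pev p x - pev q x := by simp [pev]
@[simp] lemma pev_mul (p q : P2) (x) : pev (p * q) x = pev p x * pev q x := by simp [pev]
@[simp] lemma pev_C (c : ℝ) (x) : pev (C c) x = c := by simp [pev]
@[simp] lemma pev_zero (x) : pev 0 x = 0 := by simp [pev]

lemma pev_shint (c d : ℤ) (p : P2) (x : ℤ × ℤ) :
    pev (sh (c : ℝ) (d : ℝ) p) x = pev p (x.1 + c, x.2 + d) := by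
  rw [pev_sh]; unfold pev
  refine congrArg (fun v => eval v p) ?_
  funext i; fin_cases i <;> push_cast <;> simp

@[simp] lemma sh10 (p : P2) (x) : pev (sh 1 0 p) x = pev p (x.1 + 1, x.2) := by
  simpa using pev_shint 1 0 p x
@[simp] lemma shm10 (p : P2) (x) : pev (sh (-1) 0 p) x = pev p (x.1 - 1, x.2) := by
  simpa [sub_eq_add_neg] using pev_shint (-1) 0 p x
@[simp] lemma sh01 (p : P2) (x) : pev (sh 0 1 p) x = pev p (x.1, x.2 + 1) := by
  simpa using pev_shint 0 1 p x
@[simp] lemma sh0m1 (p : P2) (x) : pev (sh 0 (-1) p) x = pev p (x.1, x.2 - 1) := by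
  simpa [sub_eq_add_neg] using pev_shint 0 (-1) p x
@[simp] lemma sh1m1 (p : P2) (x) : pev (sh 1 (-1) p) x = pev p (x.1 + 1, x.2 - 1) := by
  simpa [sub_eq_add_neg] using pev_shint 1 (-1) p x
@[simp] lemma shm11 (p : P2) (x) : pev (sh (-1) 1 p) x = pev p (x.1 - 1, x.2 + 1) := by
  simpa [sub_eq_add_neg] using pev_shint (-1) 1 p x

def Dpoly (A11 A12 A21 A22 B1 B2 : P2) (p : P2) : P2 :=
  A11 * (sh 1 0 p - C 2 * p + sh (-1) 0 p)
  + A12 * (sh 1 0 p - sh 1 (-1) p - p + sh 0 (-1) p)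
  + A21 * (sh 0 1 p - sh (-1) 1 p - p + sh (-1) 0 p)
  + A22 * (sh 0 1 p - C 2 * p + sh 0 (-1) p)
  + B1 * (sh 1 0 p - p) + B2 * (sh 0 1 p - p)

lemma pev_Dpoly (A11 A12 A21 A22 B1 B2 : P2) (p : P2) (x : ℤ × ℤ) :
    pev (Dpoly A11 A12 A21 A22 B1 B2 p) x = Dop A11 A12 A21 A22 B1 B2 (pev p) x := by
  simp only [Dpoly, Dop, fd1, fd2, bd1, bd2, pev_add, pev_sub, pev_mul, pev_C,
    sh10, shm10, sh01, sh0m1, sh1m1, shm11]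
  ring

/-! ### degree predicate -/
def ltd (n : ℕ) (p : P2) : Prop := p = 0 ∨ p.totalDegree < n

lemma ltd_zero (n : ℕ) : ltd n 0 := Or.inl rfl

lemma ltd_of_lt {n : ℕ} {p : P2} (h : p.totalDegree < n) : ltd n p := Or.inr h

lemma ltd_mono {m n : ℕ} {p : P2} (h : m ≤ n) : ltd m p → ltd n p := by
  rintro (rfl | h') ; exact Or.inl rfl; exact Or.inr (lt_of_lt_of_le h' h)

lemma ltd_add {n : ℕ} {p q : P2} (hp : ltd n p) (hq : ltd n q) : ltd n (p + q) := by
  rcases hp with rfl | hp; · simpa using hq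
  rcases hq with rfl | hq; · simpa using ltd_of_lt hp
  exact Or.inr (lt_of_le_of_lt (totalDegree_add p q) (max_lt hp hq))

lemma ltd_neg {n : ℕ} {p : P2} (hp : ltd n p) : ltd n (-p) := by
  rcases hp with rfl | hp; · simpa using ltd_zero n
  · exact Or.inr (by simpa [totalDegree_neg] using hp)

lemma ltd_sub {n : ℕ} {p q : P2} (hp : ltd n p) (hq : ltd n q) : ltd n (p - q) := by
  rw [sub_eq_add_neg]; exact ltd_add hp (ltd_neg hq)

lemma ltd_sum {n : ℕ} {ι : Type*} (s : Finset ι) (f : ι → P2)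
    (h : ∀ i ∈ s, ltd n (f i)) : ltd n (∑ i ∈ s, f i) :=
  Finset.sum_induction f (ltd n) (fun _ _ => ltd_add) (ltd_zero n) h

lemma ltd_mul_le {d m : ℕ} {p q : P2} (hq : q.totalDegree ≤ d) (hp : ltd m p) :
    ltd (d + m) (q * p) := by
  rcases hp with rfl | hp; · simpa using ltd_zero _
  refine Or.inr (lt_of_le_of_lt (totalDegree_mul q p) ?_)
  exact add_lt_add_of_le_of_lt hq hp

lemma ltd_mul {m m' : ℕ} {p q : P2} (hp : ltd m p) (hq : ltd m' q) :
    ltd (m + m') (p * q) := by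
  rcases hp with rfl | hp; · simpa using ltd_zero _
  rcases hq with rfl | hq; · simpa using ltd_zero _
  exact Or.inr (lt_of_le_of_lt (totalDegree_mul p q) (add_lt_add hp hq))

lemma ltd_CXpow {c : ℝ} {k : Fin 2} {t n : ℕ} (h : t < n) : ltd n (C c * X k ^ t) := by
  refine Or.inr (lt_of_le_of_lt ?_ h)
  calc (C c * X k ^ t : P2).totalDegree ≤ (C c : P2).totalDegree + (X k ^ t : P2).totalDegree :=
        totalDegree_mul _ _
    _ ≤ t := by simp [totalDegree_X_pow]

lemma degmu (μ : Fin 2 →₀ ℕ) : (μ.sum fun _ e => e) = μ 0 + μ 1 := by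
  rw [Finsupp.sum_fintype _ _ (fun _ => rfl), Fin.sum_univ_two]

lemma ltd_coeff_zero {n : ℕ} {p : P2} (h : ltd n p) {μ : Fin 2 →₀ ℕ}
    (hμ : n ≤ μ 0 + μ 1) : coeff μ p = 0 := by
  rcases h with rfl | h; · simp
  by_contra hc
  have : (μ.sum fun _ e => e) ≤ p.totalDegree := le_totalDegree (by simpa [mem_support_iff] using hc)
  rw [degmu] at this; omega

lemma ltd_support {n : ℕ} {p : P2} (h : ltd n p) : ∀ μ ∈ p.support, μ 0 + μ 1 < n := by
  intro μ hμ
  by_contra hc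
  exact (mem_support_iff.mp hμ) (ltd_coeff_zero h (by omega))

/-! ### binomial expansions -/
lemma Xadd_pow (k : Fin 2) (c : ℝ) (i : ℕ) :
    (X k + C c : P2) ^ i = ∑ t ∈ Finset.range (i + 1), C (c ^ (i - t) * (i.choose t : ℝ)) * X k ^ t := by
  rw [add_pow]
  refine Finset.sum_congr rfl fun t ht => ?_
  rw [map_mul, ← C_pow, map_natCast]
  ring

lemma Xsub_pow (k : Fin 2) (i : ℕ) :
    (X k - C 1 : P2) ^ i = ∑ t ∈ Finset.range (i + 1), C ((-1 : ℝ) ^ (i - t) * (i.choose t : ℝ)) * X k ^ t := by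
  have h : (X k - C 1 : P2) = X k + C (-1) := by rw [map_neg, ← sub_eq_add_neg]
  rw [h, Xadd_pow]

lemma fp_struct (k : Fin 2) (i : ℕ) :
    ∃ e, (X k + C 1 : P2) ^ i - X k ^ i = C (i : ℝ) * X k ^ (i - 1) + e ∧ ltd (i - 1) e := by
  cases i with
  | zero => exact ⟨0, by simp, ltd_zero _⟩
  | succ m =>
    refine ⟨∑ t ∈ Finset.range m, C ((1:ℝ) ^ (m + 1 - t) * ((m+1).choose t : ℝ)) * X k ^ t, ?_, ?_⟩
    · rw [Xadd_pow, Finset.sum_range_succ, Finset.sum_range_succ]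
      simp [Nat.choose_succ_self_right]
      push_cast
      ring
    · exact ltd_sum _ _ fun t ht => ltd_CXpow (by simpa using Finset.mem_range.mp ht)

lemma fm_struct (k : Fin 2) (i : ℕ) :
    ∃ e, X k ^ i - (X k - C 1 : P2) ^ i = C (i : ℝ) * X k ^ (i - 1) + e ∧ ltd (i - 1) e := by
  cases i with
  | zero => exact ⟨0, by simp, ltd_zero _⟩
  | succ m =>
    refine ⟨-∑ t ∈ Finset.range m, C ((-1:ℝ) ^ (m + 1 - t) * ((m+1).choose t : ℝ)) * X k ^ t, ?_, ?_⟩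
    · rw [Xsub_pow, Finset.sum_range_succ, Finset.sum_range_succ]
      simp [Nat.choose_succ_self_right]
      push_cast
      ring
    · exact ltd_neg (ltd_sum _ _ fun t ht => ltd_CXpow (by simpa using Finset.mem_range.mp ht))

lemma choose_nat (m : ℕ) : (m+2).choose m * 2 = (m+2) * (m+1) := by
  have h1 : (m+2).choose m = (m+2).choose 2 := by
    have := Nat.choose_symm (n := m + 2) (k := 2) (by omega)
    simpa using this
  have hd : 2 ∣ (m + 2) * (m + 1) := by
    have := (Nat.even_mul_succ_self (m+1)).two_dvd
    simpa [mul_comm] using this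
  have he : m + 2 - 1 = m + 1 := rfl
  rw [h1, Nat.choose_two_right, he]
  exact Nat.div_mul_cancel hd

lemma d1_struct (k : Fin 2) (i : ℕ) :
    ∃ e, (X k + C 1 : P2) ^ i + (X k - C 1 : P2) ^ i - C 2 * X k ^ i
      = C ((i : ℝ) * ((i : ℝ) - 1)) * X k ^ (i - 2) + e ∧ ltd (i - 2) e := by
  obtain _ | (_ | m) := i
  · exact ⟨0, by simp [map_ofNat]; ring, ltd_zero _⟩
  · exact ⟨0, by simp [map_ofNat]; ring, ltd_zero _⟩
  · refine ⟨(∑ t ∈ Finset.range m, C ((1:ℝ) ^ (m + 2 - t) * ((m+2).choose t : ℝ)) * X k ^ t)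
      + (∑ t ∈ Finset.range m, C ((-1:ℝ) ^ (m + 2 - t) * ((m+2).choose t : ℝ)) * X k ^ t), ?_, ?_⟩
    · rw [Xadd_pow, Xsub_pow, Finset.sum_range_succ, Finset.sum_range_succ,
        Finset.sum_range_succ, Finset.sum_range_succ, Finset.sum_range_succ, Finset.sum_range_succ]
      have hc2 : (((m+2).choose m : ℕ) : P2) * 2 = ((m:P2)+2) * ((m:P2)+1) := by
        exact_mod_cast congrArg (Nat.cast : ℕ → P2) (choose_nat m)
      have e1 : m + 2 - m = 2 := by omega
      have e2 : m + 2 - (m+1) = 1 := by omega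
      simp [Nat.choose_succ_self_right, map_ofNat, e1, e2]
      push_cast
      linear_combination (X k ^ m : P2) * hc2
    · exact ltd_add (ltd_sum _ _ fun t ht => ltd_CXpow (by simpa using Finset.mem_range.mp ht))
        (ltd_sum _ _ fun t ht => ltd_CXpow (by simpa using Finset.mem_range.mp ht))

lemma Dpoly_mono (A11 A12 A21 A22 B1 B2 : P2) (i j : ℕ) :
    Dpoly A11 A12 A21 A22 B1 B2 (X 0 ^ i * X 1 ^ j) =
      A11 * ((((X 0 + C 1 : P2)) ^ i + ((X 0 - C 1 : P2)) ^ i - C 2 * X 0 ^ i) * X 1 ^ j)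
    + A12 * ((((X 0 + C 1 : P2)) ^ i - X 0 ^ i) * (X 1 ^ j - ((X 1 - C 1 : P2)) ^ j))
    + A21 * ((X 0 ^ i - ((X 0 - C 1 : P2)) ^ i) * (((X 1 + C 1 : P2)) ^ j - X 1 ^ j))
    + A22 * (X 0 ^ i * (((X 1 + C 1 : P2)) ^ j + ((X 1 - C 1 : P2)) ^ j - C 2 * X 1 ^ j))
    + B1 * ((((X 0 + C 1 : P2)) ^ i - X 0 ^ i) * X 1 ^ j)
    + B2 * (X 0 ^ i * (((X 1 + C 1 : P2)) ^ j - X 1 ^ j)) := by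
  simp only [Dpoly, sh, map_mul, map_pow, map_neg, C_0, C_1, aeval_X,
    Matrix.cons_val_zero, Matrix.cons_val_one, Matrix.head_cons, add_zero, sub_eq_add_neg]
  ring

lemma ltd_zero_eq {e : P2} (h : ltd 0 e) : e = 0 := by
  rcases h with h | h; exact h; exact absurd h (Nat.not_lt_zero _)

lemma tot_CXX_le (c : ℝ) (m l : ℕ) : (C c * (X 0 ^ m * X 1 ^ l) : P2).totalDegree ≤ m + l := by
  refine (totalDegree_mul _ _).trans ?_
  have := totalDegree_mul (X 0 ^ m : P2) (X 1 ^ l)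
  simp only [totalDegree_C, totalDegree_X_pow] at *
  omega

lemma ltd_CXX {c : ℝ} {m l n : ℕ} (h : m + l < n) : ltd n (C c * (X 0 ^ m * X 1 ^ l) : P2) :=
  ltd_of_lt (lt_of_le_of_lt (tot_CXX_le c m l) h)

lemma tot_CX_le (c : ℝ) (k : Fin 2) : (C c * X k : P2).totalDegree ≤ 1 := by
  refine (totalDegree_mul _ _).trans ?_; simp [totalDegree_X]

lemma totlin_le (u v w : ℝ) : (C u * X 0 + C v * X 1 + C w : P2).totalDegree ≤ 1 := by
  refine (totalDegree_add _ _).trans (max_le ((totalDegree_add _ _).trans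
    (max_le (tot_CX_le u 0) (tot_CX_le v 1))) (by simp))

lemma totA11_le (a u v w : ℝ) :
    (C a * X 0 ^ 2 + C u * X 0 + C v * X 1 + C w : P2).totalDegree ≤ 2 := by
  refine (totalDegree_add _ _).trans (max_le ((totalDegree_add _ _).trans
    (max_le ((totalDegree_add _ _).trans (max_le ?_ ?_)) ?_)) ?_)
  · exact (totalDegree_mul _ _).trans (by simp [totalDegree_X_pow])
  · exact (tot_CX_le u 0).trans (by omega)
  · exact (tot_CX_le v 1).trans (by omega)
  · simp

lemma totA22_le (a u v w : ℝ) :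
    (C a * X 1 ^ 2 + C u * X 0 + C v * X 1 + C w : P2).totalDegree ≤ 2 := by
  refine (totalDegree_add _ _).trans (max_le ((totalDegree_add _ _).trans
    (max_le ((totalDegree_add _ _).trans (max_le ?_ ?_)) ?_)) ?_)
  · exact (totalDegree_mul _ _).trans (by simp [totalDegree_X_pow])
  · exact (tot_CX_le u 0).trans (by omega)
  · exact (tot_CX_le v 1).trans (by omega)
  · simp

lemma totA12_le (a u v w : ℝ) :
    (C a * (X 0 * X 1) + C u * X 0 + C v * X 1 + C w : P2).totalDegree ≤ 2 := by
  refine (totalDegree_add _ _).trans (max_le ((totalDegree_add _ _).trans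
    (max_le ((totalDegree_add _ _).trans (max_le ?_ ?_)) ?_)) ?_)
  · refine (totalDegree_mul _ _).trans ?_
    have := totalDegree_mul (X 0 : P2) (X 1)
    simp only [totalDegree_C, totalDegree_X] at *
    omega
  · exact (tot_CX_le u 0).trans (by omega)
  · exact (tot_CX_le v 1).trans (by omega)
  · simp

lemma totB_le (b d : ℝ) (k : Fin 2) : (C b * X k + C d : P2).totalDegree ≤ 1 := by
  refine (totalDegree_add _ _).trans (max_le (tot_CX_le b k) (by simp))

lemma termA11 (a u v w : ℝ) (i j : ℕ) :
    ltd (i + j) ((C a * X 0 ^ 2 + C u * X 0 + C v * X 1 + C w) *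
        ((((X 0 + C 1 : P2)) ^ i + ((X 0 - C 1 : P2)) ^ i - C 2 * X 0 ^ i) * X 1 ^ j)
      - C (a * ((i : ℝ) * ((i : ℝ) - 1))) * (X 0 ^ i * X 1 ^ j)) := by
  obtain ⟨e, he, hle⟩ := d1_struct 0 i
  rw [he]
  obtain _ | (_ | m) := i
  · rw [ltd_zero_eq hle]; simpa using ltd_zero (0 + j)
  · rw [ltd_zero_eq hle]; simpa using ltd_zero (1 + j)
  · have key : (C a * X 0 ^ 2 + C u * X 0 + C v * X 1 + C w) *
        ((C (((m+2 : ℕ) : ℝ) * (((m+2 : ℕ) : ℝ) - 1)) * X 0 ^ (m + 2 - 2) + e) * X 1 ^ j)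
      - C (a * (((m+2 : ℕ) : ℝ) * (((m+2 : ℕ) : ℝ) - 1))) * (X 0 ^ (m+2) * X 1 ^ j)
      = (C u * X 0 + C v * X 1 + C w) *
          (C (((m+2 : ℕ) : ℝ) * (((m+2 : ℕ) : ℝ) - 1)) * (X 0 ^ m * X 1 ^ j))
        + ((C a * X 0 ^ 2 + C u * X 0 + C v * X 1 + C w) * X 1 ^ j) * e := by
      have hmm : m + 2 - 2 = m := by omega
      rw [hmm]
      simp only [map_mul, map_sub, map_natCast, map_one]
      push_cast
      ring
    rw [key]
    refine ltd_add ?_ ?_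
    · exact ltd_mono (by omega) (ltd_mul_le (totlin_le u v w) (ltd_CXX (n := m + j + 1) (by omega)))
    · exact ltd_mono (by omega) (ltd_mul_le ((totalDegree_mul _ _).trans
        (add_le_add (totA11_le a u v w) (by simp [totalDegree_X_pow] : (X 1 ^ j : P2).totalDegree ≤ j))) hle)

lemma termA22 (a u v w : ℝ) (i j : ℕ) :
    ltd (i + j) ((C a * X 1 ^ 2 + C u * X 0 + C v * X 1 + C w) *
        (X 0 ^ i * (((X 1 + C 1 : P2)) ^ j + ((X 1 - C 1 : P2)) ^ j - C 2 * X 1 ^ j))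
      - C (a * ((j : ℝ) * ((j : ℝ) - 1))) * (X 0 ^ i * X 1 ^ j)) := by
  obtain ⟨e, he, hle⟩ := d1_struct 1 j
  rw [he]
  obtain _ | (_ | m) := j
  · rw [ltd_zero_eq hle]; simpa using ltd_zero (i + 0)
  · rw [ltd_zero_eq hle]; simpa using ltd_zero (i + 1)
  · have key : (C a * X 1 ^ 2 + C u * X 0 + C v * X 1 + C w) *
        (X 0 ^ i * (C (((m+2 : ℕ) : ℝ) * (((m+2 : ℕ) : ℝ) - 1)) * X 1 ^ (m + 2 - 2) + e))
      - C (a * (((m+2 : ℕ) : ℝ) * (((m+2 : ℕ) : ℝ) - 1))) * (X 0 ^ i * X 1 ^ (m+2))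
      = (C u * X 0 + C v * X 1 + C w) *
          (C (((m+2 : ℕ) : ℝ) * (((m+2 : ℕ) : ℝ) - 1)) * (X 0 ^ i * X 1 ^ m))
        + ((C a * X 1 ^ 2 + C u * X 0 + C v * X 1 + C w) * X 0 ^ i) * e := by
      have hmm : m + 2 - 2 = m := by omega
      rw [hmm]
      simp only [map_mul, map_sub, map_natCast, map_one]
      push_cast
      ring
    rw [key]
    refine ltd_add ?_ ?_
    · exact ltd_mono (by omega) (ltd_mul_le (totlin_le u v w) (ltd_CXX (n := i + m + 1) (by omega)))
    · exact ltd_mono (by omega) (ltd_mul_le ((totalDegree_mul _ _).trans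
        (add_le_add (totA22_le a u v w) (by simp [totalDegree_X_pow] : (X 0 ^ i : P2).totalDegree ≤ i))) hle)

lemma termA12 (a u v w : ℝ) (i j : ℕ) :
    ltd (i + j) ((C a * (X 0 * X 1) + C u * X 0 + C v * X 1 + C w) *
        ((((X 0 + C 1 : P2)) ^ i - X 0 ^ i) * (X 1 ^ j - ((X 1 - C 1 : P2)) ^ j))
      - C (a * (i : ℝ) * (j : ℝ)) * (X 0 ^ i * X 1 ^ j)) := by
  obtain ⟨e, he, hle⟩ := fp_struct 0 i
  obtain ⟨f, hf, hlf⟩ := fm_struct 1 j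
  rw [he, hf]
  obtain _ | m := i
  · rw [ltd_zero_eq hle]; simpa using ltd_zero (0 + j)
  obtain _ | l := j
  · rw [ltd_zero_eq hlf]; simpa using ltd_zero (m + 1 + 0)
  have key : (C a * (X 0 * X 1) + C u * X 0 + C v * X 1 + C w) *
        ((C ((m+1 : ℕ) : ℝ) * X 0 ^ (m + 1 - 1) + e) * (C ((l+1 : ℕ) : ℝ) * X 1 ^ (l + 1 - 1) + f))
      - C (a * ((m+1 : ℕ) : ℝ) * ((l+1 : ℕ) : ℝ)) * (X 0 ^ (m+1) * X 1 ^ (l+1))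
      = (C u * X 0 + C v * X 1 + C w) *
          (C (((m+1 : ℕ) : ℝ) * ((l+1 : ℕ) : ℝ)) * (X 0 ^ m * X 1 ^ l))
        + ((C a * (X 0 * X 1) + C u * X 0 + C v * X 1 + C w) * (C ((m+1 : ℕ) : ℝ) * X 0 ^ m)) * f
        + ((C a * (X 0 * X 1) + C u * X 0 + C v * X 1 + C w) * (C ((l+1 : ℕ) : ℝ) * X 1 ^ l)) * e
        + ((C a * (X 0 * X 1) + C u * X 0 + C v * X 1 + C w)) * (e * f) := by
    have h1 : m + 1 - 1 = m := by omega
    have h2 : l + 1 - 1 = l := by omega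
    rw [h1, h2]
    simp only [map_mul, map_natCast]
    push_cast
    ring
  rw [key]
  refine ltd_add (ltd_add (ltd_add ?_ ?_) ?_) ?_
  · exact ltd_mono (by omega) (ltd_mul_le (totlin_le u v w) (ltd_CXX (n := m + l + 1) (by omega)))
  · have h := ltd_mul_le ((totalDegree_mul _ _).trans
      (add_le_add (totA12_le a u v w) ((totalDegree_mul (C ((m+1 : ℕ) : ℝ) : P2) (X 0 ^ m)).trans
        (by rw [totalDegree_C, totalDegree_X_pow] : (C ((m+1 : ℕ) : ℝ) : P2).totalDegree + (X 0 ^ m : P2).totalDegree ≤ 0 + m)))) hlf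
    exact ltd_mono (by omega) h
  · have h := ltd_mul_le ((totalDegree_mul _ _).trans
      (add_le_add (totA12_le a u v w) ((totalDegree_mul (C ((l+1 : ℕ) : ℝ) : P2) (X 1 ^ l)).trans
        (by rw [totalDegree_C, totalDegree_X_pow] : (C ((l+1 : ℕ) : ℝ) : P2).totalDegree + (X 1 ^ l : P2).totalDegree ≤ 0 + l)))) hle
    exact ltd_mono (by omega) h
  · exact ltd_mono (by omega) (ltd_mul_le (totA12_le a u v w) (ltd_mul hle hlf))

lemma termA21 (a u v w : ℝ) (i j : ℕ) :
    ltd (i + j) ((C a * (X 0 * X 1) + C u * X 0 + C v * X 1 + C w) *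
        ((X 0 ^ i - ((X 0 - C 1 : P2)) ^ i) * (((X 1 + C 1 : P2)) ^ j - X 1 ^ j))
      - C (a * (i : ℝ) * (j : ℝ)) * (X 0 ^ i * X 1 ^ j)) := by
  obtain ⟨e, he, hle⟩ := fm_struct 0 i
  obtain ⟨f, hf, hlf⟩ := fp_struct 1 j
  rw [he, hf]
  obtain _ | m := i
  · rw [ltd_zero_eq hle]; simpa using ltd_zero (0 + j)
  obtain _ | l := j
  · rw [ltd_zero_eq hlf]; simpa using ltd_zero (m + 1 + 0)
  have key : (C a * (X 0 * X 1) + C u * X 0 + C v * X 1 + C w) *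
        ((C ((m+1 : ℕ) : ℝ) * X 0 ^ (m + 1 - 1) + e) * (C ((l+1 : ℕ) : ℝ) * X 1 ^ (l + 1 - 1) + f))
      - C (a * ((m+1 : ℕ) : ℝ) * ((l+1 : ℕ) : ℝ)) * (X 0 ^ (m+1) * X 1 ^ (l+1))
      = (C u * X 0 + C v * X 1 + C w) *
          (C (((m+1 : ℕ) : ℝ) * ((l+1 : ℕ) : ℝ)) * (X 0 ^ m * X 1 ^ l))
        + ((C a * (X 0 * X 1) + C u * X 0 + C v * X 1 + C w) * (C ((m+1 : ℕ) : ℝ) * X 0 ^ m)) * f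
        + ((C a * (X 0 * X 1) + C u * X 0 + C v * X 1 + C w) * (C ((l+1 : ℕ) : ℝ) * X 1 ^ l)) * e
        + ((C a * (X 0 * X 1) + C u * X 0 + C v * X 1 + C w)) * (e * f) := by
    have h1 : m + 1 - 1 = m := by omega
    have h2 : l + 1 - 1 = l := by omega
    rw [h1, h2]
    simp only [map_mul, map_natCast]
    push_cast
    ring
  rw [key]
  refine ltd_add (ltd_add (ltd_add ?_ ?_) ?_) ?_
  · exact ltd_mono (by omega) (ltd_mul_le (totlin_le u v w) (ltd_CXX (n := m + l + 1) (by omega)))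
  · have h := ltd_mul_le ((totalDegree_mul _ _).trans
      (add_le_add (totA12_le a u v w) ((totalDegree_mul (C ((m+1 : ℕ) : ℝ) : P2) (X 0 ^ m)).trans
        (by rw [totalDegree_C, totalDegree_X_pow] : (C ((m+1 : ℕ) : ℝ) : P2).totalDegree + (X 0 ^ m : P2).totalDegree ≤ 0 + m)))) hlf
    exact ltd_mono (by omega) h
  · have h := ltd_mul_le ((totalDegree_mul _ _).trans
      (add_le_add (totA12_le a u v w) ((totalDegree_mul (C ((l+1 : ℕ) : ℝ) : P2) (X 1 ^ l)).trans
        (by rw [totalDegree_C, totalDegree_X_pow] : (C ((l+1 : ℕ) : ℝ) : P2).totalDegree + (X 1 ^ l : P2).totalDegree ≤ 0 + l)))) hle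
    exact ltd_mono (by omega) h
  · exact ltd_mono (by omega) (ltd_mul_le (totA12_le a u v w) (ltd_mul hle hlf))

lemma termB1 (b d : ℝ) (i j : ℕ) :
    ltd (i + j) ((C b * X 0 + C d) * ((((X 0 + C 1 : P2)) ^ i - X 0 ^ i) * X 1 ^ j)
      - C (b * (i : ℝ)) * (X 0 ^ i * X 1 ^ j)) := by
  obtain ⟨e, he, hle⟩ := fp_struct 0 i
  rw [he]
  obtain _ | m := i
  · rw [ltd_zero_eq hle]; simpa using ltd_zero (0 + j)
  have key : (C b * X 0 + C d) * ((C ((m+1 : ℕ) : ℝ) * X 0 ^ (m + 1 - 1) + e) * X 1 ^ j)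
      - C (b * ((m+1 : ℕ) : ℝ)) * (X 0 ^ (m+1) * X 1 ^ j)
      = C d * (C ((m+1 : ℕ) : ℝ) * (X 0 ^ m * X 1 ^ j))
        + ((C b * X 0 + C d) * X 1 ^ j) * e := by
    have h1 : m + 1 - 1 = m := by omega
    rw [h1]
    simp only [map_mul, map_natCast]
    push_cast
    ring
  rw [key]
  refine ltd_add ?_ ?_
  · exact ltd_mono (by omega) (ltd_mul_le (le_of_eq (totalDegree_C d))
      (ltd_CXX (n := m + j + 1) (by omega)))
  · exact ltd_mono (by omega) (ltd_mul_le ((totalDegree_mul _ _).trans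
      (add_le_add (totB_le b d 0) (by simp [totalDegree_X_pow] : (X 1 ^ j : P2).totalDegree ≤ j))) hle)

lemma termB2 (b d : ℝ) (i j : ℕ) :
    ltd (i + j) ((C b * X 1 + C d) * (X 0 ^ i * (((X 1 + C 1 : P2)) ^ j - X 1 ^ j))
      - C (b * (j : ℝ)) * (X 0 ^ i * X 1 ^ j)) := by
  obtain ⟨f, hf, hlf⟩ := fp_struct 1 j
  rw [hf]
  obtain _ | l := j
  · rw [ltd_zero_eq hlf]; simpa using ltd_zero (i + 0)
  have key : (C b * X 1 + C d) * (X 0 ^ i * (C ((l+1 : ℕ) : ℝ) * X 1 ^ (l + 1 - 1) + f))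
      - C (b * ((l+1 : ℕ) : ℝ)) * (X 0 ^ i * X 1 ^ (l+1))
      = C d * (C ((l+1 : ℕ) : ℝ) * (X 0 ^ i * X 1 ^ l))
        + ((C b * X 1 + C d) * X 0 ^ i) * f := by
    have h1 : l + 1 - 1 = l := by omega
    rw [h1]
    simp only [map_mul, map_natCast]
    push_cast
    ring
  rw [key]
  refine ltd_add ?_ ?_
  · exact ltd_mono (by omega) (ltd_mul_le (le_of_eq (totalDegree_C d))
      (ltd_CXX (n := i + l + 1) (by omega)))
  · exact ltd_mono (by omega) (ltd_mul_le ((totalDegree_mul _ _).trans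
      (add_le_add (totB_le b d 1) (by simp [totalDegree_X_pow] : (X 0 ^ i : P2).totalDegree ≤ i))) hlf)

section Main
variable (a b a11 b11 c11 a12 b12 c12 a21 b21 c21 a22 b22 c22 d1 d2 : ℝ)

def A11p : P2 := C a * X 0 ^ 2 + C a11 * X 0 + C b11 * X 1 + C c11
def A12p : P2 := C a * (X 0 * X 1) + C a12 * X 0 + C b12 * X 1 + C c12
def A21p : P2 := C a * (X 0 * X 1) + C a21 * X 0 + C b21 * X 1 + C c21
def A22p : P2 := C a * X 1 ^ 2 + C a22 * X 0 + C b22 * X 1 + C c22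
def B1p : P2 := C b * X 0 + C d1
def B2p : P2 := C b * X 1 + C d2

def DD (p : P2) : P2 := Dpoly (A11p a a11 b11 c11) (A12p a a12 b12 c12) (A21p a a21 b21 c21)
  (A22p a a22 b22 c22) (B1p b d1) (B2p b d2) p

def lam (n : ℕ) : ℝ := (n : ℝ) * (((n : ℝ) - 1) * a + b)

lemma core (i j : ℕ) :
    ltd (i + j) (DD a b a11 b11 c11 a12 b12 c12 a21 b21 c21 a22 b22 c22 d1 d2 (X 0 ^ i * X 1 ^ j)
      - C (lam a b (i + j)) * (X 0 ^ i * X 1 ^ j)) := by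
  have H := ltd_add (ltd_add (ltd_add (ltd_add (ltd_add
    (termA11 a a11 b11 c11 i j) (termA12 a a12 b12 c12 i j)) (termA21 a a21 b21 c21 i j))
    (termA22 a a22 b22 c22 i j)) (termB1 b d1 i j)) (termB2 b d2 i j)
  have hlam : lam a b (i + j) = a * ((i : ℝ) * ((i : ℝ) - 1)) + a * (i : ℝ) * (j : ℝ)
      + a * (i : ℝ) * (j : ℝ) + a * ((j : ℝ) * ((j : ℝ) - 1)) + b * (i : ℝ) + b * (j : ℝ) := by
    unfold lam; push_cast; ring
  unfold DD A11p A12p A21p A22p B1p B2p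
  rw [Dpoly_mono, hlam, map_add, map_add, map_add, map_add, map_add]
  convert H using 1
  ring

lemma mono_eq' (μ : Fin 2 →₀ ℕ) (c : ℝ) :
    (monomial μ c : P2) = C c * (X 0 ^ μ 0 * X 1 ^ μ 1) := by
  rw [monomial_eq]
  congr 1
  rw [Finsupp.prod_fintype _ _ (fun _ => pow_zero _), Fin.prod_univ_two]

lemma sh_C (u v c : ℝ) : sh u v (C c) = C c := by simp [sh]

lemma Dpoly_add (A11 A12 A21 A22 B1 B2 p q : P2) :
    Dpoly A11 A12 A21 A22 B1 B2 (p + q) =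
      Dpoly A11 A12 A21 A22 B1 B2 p + Dpoly A11 A12 A21 A22 B1 B2 q := by
  simp only [Dpoly, map_add]; ring

lemma Dpoly_zero (A11 A12 A21 A22 B1 B2 : P2) :
    Dpoly A11 A12 A21 A22 B1 B2 0 = 0 := by
  simp only [Dpoly, map_zero]; ring

lemma Dpoly_Cmul (A11 A12 A21 A22 B1 B2 : P2) (c : ℝ) (p : P2) :
    Dpoly A11 A12 A21 A22 B1 B2 (C c * p) = C c * Dpoly A11 A12 A21 A22 B1 B2 p := by
  simp only [Dpoly, map_mul, sh_C]; ring

lemma Dpoly_sum (A11 A12 A21 A22 B1 B2 : P2) {ι : Type*} (s : Finset ι) (f : ι → P2) :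
    Dpoly A11 A12 A21 A22 B1 B2 (∑ i ∈ s, f i) = ∑ i ∈ s, Dpoly A11 A12 A21 A22 B1 B2 (f i) := by
  classical
  induction s using Finset.induction_on with
  | empty => simpa using Dpoly_zero _ _ _ _ _ _
  | insert x t h ih => rw [Finset.sum_insert h, Finset.sum_insert h, Dpoly_add, ih]

lemma DD_decomp (p : P2) :
    DD a b a11 b11 c11 a12 b12 c12 a21 b21 c21 a22 b22 c22 d1 d2 p
      = ∑ μ ∈ p.support, C (coeff μ p) *
          DD a b a11 b11 c11 a12 b12 c12 a21 b21 c21 a22 b22 c22 d1 d2 (X 0 ^ μ 0 * X 1 ^ μ 1) := by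
  conv_lhs => rw [← p.support_sum_monomial_coeff]
  unfold DD
  rw [Dpoly_sum]
  refine Finset.sum_congr rfl fun μ hμ => ?_
  rw [mono_eq', Dpoly_Cmul]

lemma ltd_succ_tot {N : ℕ} {q : P2} (h : ltd (N + 1) q) : q.totalDegree ≤ N := by
  rcases h with rfl | h; · simp
  · omega

lemma supdeg_le {p : P2} {μ : Fin 2 →₀ ℕ} (hμ : μ ∈ p.support) : μ 0 + μ 1 ≤ p.totalDegree := by
  have := le_totalDegree hμ
  rwa [degmu] at this

lemma DD_ltd {N : ℕ} {p : P2} (hp : p.totalDegree ≤ N) :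
    ltd (N + 1) (DD a b a11 b11 c11 a12 b12 c12 a21 b21 c21 a22 b22 c22 d1 d2 p) := by
  rw [DD_decomp]
  refine ltd_sum _ _ fun μ hμ => ?_
  have hdeg : μ 0 + μ 1 ≤ N := le_trans (supdeg_le hμ) hp
  have hcore := core a b a11 b11 c11 a12 b12 c12 a21 b21 c21 a22 b22 c22 d1 d2 (μ 0) (μ 1)
  have hsplit : DD a b a11 b11 c11 a12 b12 c12 a21 b21 c21 a22 b22 c22 d1 d2 (X 0 ^ μ 0 * X 1 ^ μ 1)
      = (DD a b a11 b11 c11 a12 b12 c12 a21 b21 c21 a22 b22 c22 d1 d2 (X 0 ^ μ 0 * X 1 ^ μ 1)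
          - C (lam a b (μ 0 + μ 1)) * (X 0 ^ μ 0 * X 1 ^ μ 1))
        + C (lam a b (μ 0 + μ 1)) * (X 0 ^ μ 0 * X 1 ^ μ 1) := by ring
  rw [hsplit]
  have h1 : ltd (N + 1) (DD a b a11 b11 c11 a12 b12 c12 a21 b21 c21 a22 b22 c22 d1 d2 (X 0 ^ μ 0 * X 1 ^ μ 1)
      - C (lam a b (μ 0 + μ 1)) * (X 0 ^ μ 0 * X 1 ^ μ 1)) := ltd_mono (by omega) hcore
  have h2 : ltd (N + 1) (C (lam a b (μ 0 + μ 1)) * (X 0 ^ μ 0 * X 1 ^ μ 1) : P2) :=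
    ltd_CXX (by omega)
  have := ltd_mul_le (le_of_eq (totalDegree_C (coeff μ p))) (ltd_add h1 h2)
  simpa using this

lemma DD_coeff {N : ℕ} {p : P2} (hp : p.totalDegree ≤ N) {μ : Fin 2 →₀ ℕ}
    (hμ : μ 0 + μ 1 = N) :
    coeff μ (DD a b a11 b11 c11 a12 b12 c12 a21 b21 c21 a22 b22 c22 d1 d2 p)
      = lam a b N * coeff μ p := by
  classical
  rw [DD_decomp]
  rw [coeff_sum]
  have hterm : ∀ ν ∈ p.support,
      coeff μ (C (coeff ν p) * DD a b a11 b11 c11 a12 b12 c12 a21 b21 c21 a22 b22 c22 d1 d2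
        (X 0 ^ ν 0 * X 1 ^ ν 1)) = if ν = μ then lam a b N * coeff ν p else 0 := by
    intro ν hν
    have hdeg : ν 0 + ν 1 ≤ N := le_trans (supdeg_le hν) hp
    have hcore := core a b a11 b11 c11 a12 b12 c12 a21 b21 c21 a22 b22 c22 d1 d2 (ν 0) (ν 1)
    have hsplit : DD a b a11 b11 c11 a12 b12 c12 a21 b21 c21 a22 b22 c22 d1 d2 (X 0 ^ ν 0 * X 1 ^ ν 1)
        = (DD a b a11 b11 c11 a12 b12 c12 a21 b21 c21 a22 b22 c22 d1 d2 (X 0 ^ ν 0 * X 1 ^ ν 1)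
            - C (lam a b (ν 0 + ν 1)) * (X 0 ^ ν 0 * X 1 ^ ν 1))
          + C (lam a b (ν 0 + ν 1)) * (X 0 ^ ν 0 * X 1 ^ ν 1) := by ring
    rw [hsplit, mul_add, coeff_add, coeff_C_mul, ltd_coeff_zero hcore (by omega), mul_zero, zero_add]
    have hXmono : (X 0 ^ ν 0 * X 1 ^ ν 1 : P2) = monomial ν 1 := by
      rw [mono_eq' ν 1]; simp
    rw [coeff_C_mul, coeff_C_mul, hXmono, coeff_monomial]
    by_cases hc : ν = μ
    · subst hc
      rw [show ν 0 + ν 1 = N from hμ]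
      simp [mul_comm, mul_left_comm]
    · simp [hc]
  rw [Finset.sum_congr rfl hterm, Finset.sum_ite_eq' p.support μ (fun ν => lam a b N * coeff ν p)]
  by_cases hμs : μ ∈ p.support
  · simp [hμs]
  · simp [hμs, notMem_support_iff.mp hμs]

lemma lam_ne (hab : ∀ p : ℕ, a * (p : ℝ) + b ≠ 0) {m n : ℕ} (h : m < n) :
    lam a b n ≠ lam a b m := by
  have hq : ((n + m - 1 : ℕ) : ℝ) = (n : ℝ) + (m : ℝ) - 1 := by
    rw [Nat.cast_sub (by omega : 1 ≤ n + m)]; push_cast; ring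
  have hdiff : lam a b n - lam a b m = ((n : ℝ) - (m : ℝ)) * (a * ((n + m - 1 : ℕ) : ℝ) + b) := by
    unfold lam; rw [hq]; ring
  intro hEq
  rw [hEq, sub_self] at hdiff
  have h1 : ((n : ℝ) - (m : ℝ)) ≠ 0 := by
    have : (m : ℝ) < (n : ℝ) := by exact_mod_cast h
    intro hz; nlinarith
  have h2 := hab (n + m - 1)
  rcases mul_eq_zero.mp hdiff.symm with h | h
  · exact h1 h
  · exact h2 h

lemma eig_inj (hab : ∀ p : ℕ, a * (p : ℝ) + b ≠ 0) {n N : ℕ} (hNn : N < n) (p : P2)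
    (hp : p.totalDegree ≤ N)
    (heq : DD a b a11 b11 c11 a12 b12 c12 a21 b21 c21 a22 b22 c22 d1 d2 p
      = C (lam a b n) * p) : p = 0 := by
  by_contra hne
  have hsup : p.support.Nonempty := support_nonempty.mpr hne
  obtain ⟨μ, hμ, hμm⟩ := Finset.exists_mem_eq_sup p.support hsup (fun s => s.sum fun _ e => e)
  have hμdeg : μ 0 + μ 1 = p.totalDegree := by
    rw [← degmu]; rw [totalDegree, hμm]
  have h1 := DD_coeff a b a11 b11 c11 a12 b12 c12 a21 b21 c21 a22 b22 c22 d1 d2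
    (le_refl p.totalDegree) hμdeg
  rw [heq, coeff_C_mul] at h1
  have hc : coeff μ p ≠ 0 := mem_support_iff.mp hμ
  have hlam : lam a b n = lam a b p.totalDegree := by
    exact mul_right_cancel₀ hc h1
  exact lam_ne a b hab (lt_of_le_of_lt hp hNn) hlam

lemma main_poly (hab : ∀ p : ℕ, a * (p : ℝ) + b ≠ 0) (r s : ℕ) :
    ∃ R : P2, (∀ μ ∈ R.support, μ 0 + μ 1 < r + s) ∧
      DD a b a11 b11 c11 a12 b12 c12 a21 b21 c21 a22 b22 c22 d1 d2 (X 0 ^ r * X 1 ^ s + R)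
        = C (lam a b (r + s)) * (X 0 ^ r * X 1 ^ s + R) := by
  rcases Nat.eq_zero_or_pos (r + s) with hn0 | hpos
  · -- n = 0
    have hr : r = 0 := by omega
    have hs : s = 0 := by omega
    subst hr; subst hs
    refine ⟨0, by simp, ?_⟩
    have h0 := core a b a11 b11 c11 a12 b12 c12 a21 b21 c21 a22 b22 c22 d1 d2 0 0
    have := ltd_zero_eq h0
    rw [add_zero]
    exact sub_eq_zero.mp this
  · -- n ≥ 1
    set n := r + s with hn
    set N := n - 1 with hNdef
    have hN : n = N + 1 := by omega
    set lamv := lam a b n with hlam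
    let DL : P2 →ₗ[ℝ] P2 :=
      { toFun := DD a b a11 b11 c11 a12 b12 c12 a21 b21 c21 a22 b22 c22 d1 d2
        map_add' := fun p q => Dpoly_add _ _ _ _ _ _ p q
        map_smul' := by
          intro c p
          simp only [RingHom.id_apply, smul_eq_C_mul]
          exact Dpoly_Cmul _ _ _ _ _ _ c p }
    let F : P2 →ₗ[ℝ] P2 := DL - lamv • LinearMap.id
    have hFapply : ∀ q : P2, F q
        = DD a b a11 b11 c11 a12 b12 c12 a21 b21 c21 a22 b22 c22 d1 d2 q - C lamv * q := by
      intro q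
      simp [F, DL, smul_eq_C_mul]
      rfl
    have hmap : ∀ x ∈ restrictTotalDegree (Fin 2) ℝ N, F x ∈ restrictTotalDegree (Fin 2) ℝ N := by
      intro x hx
      rw [hFapply]
      refine sub_mem ?_ ?_
      · rw [mem_restrictTotalDegree]
        exact ltd_succ_tot (DD_ltd _ _ _ _ _ _ _ _ _ _ _ _ _ _ _ _
          ((mem_restrictTotalDegree _ _ _).mp hx))
      · rw [← smul_eq_C_mul]
        exact Submodule.smul_mem _ _ hx
    let L := F.restrict hmap
    have hLval : ∀ y : restrictTotalDegree (Fin 2) ℝ N, (L y : P2) = F (y : P2) := by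
      intro y; rfl
    have hker : LinearMap.ker L = ⊥ := by
      rw [LinearMap.ker_eq_bot']
      intro z hz
      have hz' : F (z : P2) = 0 := by rw [← hLval]; exact congrArg Subtype.val hz
      rw [hFapply, sub_eq_zero] at hz'
      have hz0 : (z : P2) = 0 := by
        refine eig_inj a b a11 b11 c11 a12 b12 c12 a21 b21 c21 a22 b22 c22 d1 d2 hab
          (by omega : N < n) _ ((mem_restrictTotalDegree _ _ _).mp z.2) hz'
      exact Subtype.ext hz0
    have hinj : Function.Injective L := LinearMap.ker_eq_bot.mp hker
    have hsurj : Function.Surjective L := LinearMap.injective_iff_surjective.mp hinj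
    have hcoreM := core a b a11 b11 c11 a12 b12 c12 a21 b21 c21 a22 b22 c22 d1 d2 r s
    set E0 := DD a b a11 b11 c11 a12 b12 c12 a21 b21 c21 a22 b22 c22 d1 d2 (X 0 ^ r * X 1 ^ s)
      - C lamv * (X 0 ^ r * X 1 ^ s) with hE0
    have hmemE : E0 ∈ restrictTotalDegree (Fin 2) ℝ N := by
      rw [mem_restrictTotalDegree]
      refine ltd_succ_tot ?_
      rw [← hN]
      exact hcoreM
    obtain ⟨y, hy⟩ := hsurj ⟨-E0, neg_mem hmemE⟩
    have hyv : F (y : P2) = -E0 := by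
      rw [← hLval, hy]
    rw [hFapply, sub_eq_iff_eq_add] at hyv
    refine ⟨(y : P2), ?_, ?_⟩
    · intro μ hμ
      have := le_trans (supdeg_le hμ) ((mem_restrictTotalDegree _ _ _).mp y.2)
      omega
    · have hDDadd : DD a b a11 b11 c11 a12 b12 c12 a21 b21 c21 a22 b22 c22 d1 d2 (X 0 ^ r * X 1 ^ s + (y : P2))
          = DD a b a11 b11 c11 a12 b12 c12 a21 b21 c21 a22 b22 c22 d1 d2 (X 0 ^ r * X 1 ^ s) + DD a b a11 b11 c11 a12 b12 c12 a21 b21 c21 a22 b22 c22 d1 d2 (y : P2) := by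
        unfold DD; exact Dpoly_add _ _ _ _ _ _ _ _
      have hM : DD a b a11 b11 c11 a12 b12 c12 a21 b21 c21 a22 b22 c22 d1 d2 (X 0 ^ r * X 1 ^ s)
          = E0 + C lamv * (X 0 ^ r * X 1 ^ s) := by rw [hE0]; ring
      rw [hDDadd, hyv, hM]
      ring

end Main

/-- sufficiency — for coefficients of the admissible form with
`c₁₁+c₁₂+c₂₁+c₂₂ = 0` and `a·p + b ≠ 0` for all `p ∈ ℕ`, the equation
`𝒟u = λ_n u`, `λ_n = n((n−1)a+b)`, has a monic solution `x₁^r x₂^s + (lower degree)`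
for every `(r,s)` with `r+s = n`. -/
theorem stmt3 (A11 A12 A21 A22 B1 B2 : MvPolynomial (Fin 2) ℝ)
    (a b a11 b11 c11 a12 b12 c12 a21 b21 c21 a22 b22 c22 d1 d2 : ℝ)
    (hA11 : A11 = C a * X 0 ^ 2 + C a11 * X 0 + C b11 * X 1 + C c11)
    (hA12 : A12 = C a * (X 0 * X 1) + C a12 * X 0 + C b12 * X 1 + C c12)
    (hA21 : A21 = C a * (X 0 * X 1) + C a21 * X 0 + C b21 * X 1 + C c21)
    (hA22 : A22 = C a * X 1 ^ 2 + C a22 * X 0 + C b22 * X 1 + C c22)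
    (hB1 : B1 = C b * X 0 + C d1)
    (hB2 : B2 = C b * X 1 + C d2)
    (hab : ∀ p : ℕ, a * (p : ℝ) + b ≠ 0)
    (hc : c11 + c12 + c21 + c22 = 0) :
    ∀ n : ℕ, ∀ r s : ℕ, r + s = n →
      ∃ R : MvPolynomial (Fin 2) ℝ,
        (∀ m ∈ R.support, m 0 + m 1 < n) ∧
        Dop A11 A12 A21 A22 B1 B2 (pev (X 0 ^ r * X 1 ^ s + R)) =
          (fun x => ((n : ℝ) * (((n : ℝ) - 1) * a + b)) *
            pev (X 0 ^ r * X 1 ^ s + R) x) := by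
  intro n r s hrs
  subst hA11; subst hA12; subst hA21; subst hA22; subst hB1; subst hB2
  obtain ⟨R, hR, hReq⟩ := main_poly a b a11 b11 c11 a12 b12 c12 a21 b21 c21 a22 b22 c22 d1 d2 hab r s
  subst hrs
  refine ⟨R, hR, ?_⟩
  unfold DD A11p A12p A21p A22p B1p B2p lam at hReq
  funext x
  rw [← pev_Dpoly, hReq, pev_mul, pev_C]
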